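/- Let K be a field and M a finite J-trivial monoid. Then the family {x − x^ω : x ∈ M, x not idempotent}, regarded inside the monoid algebra MonoidAlgebra K M, is a K-basis of the Jacobson radical of MonoidAlgebra K M. -/

import Mathlib

/-- The `J`-preorder on a monoid: `x ≤_J y` iff `x = u * y * v` for some `u, v`. -/
def leJ {M : Type*} [Monoid M] (x y : M) : Prop := ∃ u v : M, x = u * y * v

/-- A monoid is `J`-trivial if `M x M = M y M` implies `x = y`. -/
def JTrivial (M : Type*) [Monoid M] : Prop :=
  ∀ x y : M, {z : M | ∃ u v : M, z = u * x * v} = {z : M | ∃ u v : M, z = u * y * v} → x = y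

open Classical

/-- `x ^ ω`: the unique idempotent among the positive powers of `x`
(in a finite `J`-trivial monoid it exists and is unique). -/
noncomputable def omegaPow {M : Type*} [Monoid M] (x : M) : M :=
  if h : ∃ e : M, IsIdempotentElem e ∧ ∃ n : ℕ, 0 < n ∧ e = x ^ n then h.choose else 1

section Aux

variable {M : Type*} [Monoid M]

lemma leJ_refl (x : M) : leJ x x := ⟨1, 1, by simp⟩

lemma leJ_trans {x y z : M} (h1 : leJ x y) (h2 : leJ y z) : leJ x z := by
  obtain ⟨u, v, rfl⟩ := h1
  obtain ⟨p, q, rfl⟩ := h2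
  exact ⟨u * p, q * v, by simp [mul_assoc]⟩

lemma leJ_antisymm (hJ : JTrivial M) {x y : M} (h1 : leJ x y) (h2 : leJ y x) : x = y := by
  obtain ⟨u, v, hx⟩ := h1
  obtain ⟨p, q, hy⟩ := h2
  apply hJ
  ext z
  simp only [Set.mem_setOf_eq]
  constructor
  · rintro ⟨a, b, rfl⟩
    exact ⟨a * u, v * b, by rw [hx]; simp [mul_assoc]⟩
  · rintro ⟨a, b, rfl⟩
    exact ⟨a * p, q * b, by rw [hy]; simp [mul_assoc]⟩

lemma exists_idem_pow [Fintype M] (x : M) :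
    ∃ e : M, IsIdempotentElem e ∧ ∃ n : ℕ, 0 < n ∧ e = x ^ n := by
  have key : ∀ i p : ℕ, 0 < i → 0 < p → x ^ i = x ^ (i + p) →
      ∃ e : M, IsIdempotentElem e ∧ ∃ n : ℕ, 0 < n ∧ e = x ^ n := by
    intro i p hi hp hx
    have step : ∀ d : ℕ, x ^ (i + d) = x ^ (i + d + p) := by
      intro d
      calc x ^ (i + d) = x ^ i * x ^ d := by rw [pow_add]
        _ = x ^ (i + p) * x ^ d := by rw [hx]
        _ = x ^ (i + d + p) := by rw [← pow_add]; congr 1; omega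
    have iter : ∀ k d : ℕ, x ^ (i + d) = x ^ (i + d + k * p) := by
      intro k
      induction k with
      | zero => intro d; simp
      | succ k ih =>
        intro d
        calc x ^ (i + d) = x ^ (i + d + k * p) := ih d
          _ = x ^ (i + (d + k * p)) := by congr 1; omega
          _ = x ^ (i + (d + k * p) + p) := step _
          _ = x ^ (i + d + (k + 1) * p) := by
            have he : i + (d + k * p) + p = i + d + (k + 1) * p := by ring
            rw [he]
    refine ⟨x ^ (i * p), ?_, i * p, Nat.mul_pos hi hp, rfl⟩
    show x ^ (i * p) * x ^ (i * p) = x ^ (i * p)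
    rw [← pow_add]
    have hle : i ≤ i * p := Nat.le_mul_of_pos_right i hp
    have h1 := iter i (i * p - i)
    have e1 : i + (i * p - i) = i * p := by omega
    rw [e1] at h1
    rw [← h1]
  obtain ⟨a, b, hab, h⟩ := Fintype.exists_ne_map_eq_of_card_lt
      (fun k : Fin (Fintype.card M + 1) => x ^ (k.1 + 1)) (by simp)
  have hab' : (a : ℕ) ≠ b := fun h' => hab (Fin.val_injective h')
  rcases hab'.lt_or_gt with hlt | hlt
  · exact key (a.1 + 1) (b.1 - a.1) (Nat.succ_pos _) (by omega)
      (by rw [h]; congr 1; omega)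
  · exact key (b.1 + 1) (a.1 - b.1) (Nat.succ_pos _) (by omega)
      (by rw [← h]; congr 1; omega)

lemma omegaPow_spec [Fintype M] (x : M) :
    IsIdempotentElem (omegaPow x) ∧ ∃ n : ℕ, 0 < n ∧ omegaPow x = x ^ n := by
  have h := exists_idem_pow x
  rw [omegaPow, dif_pos h]
  exact h.choose_spec

lemma omegaPow_of_idem [Fintype M] {x : M} (hx : IsIdempotentElem x) : omegaPow x = x := by
  obtain ⟨_, n, hn, he⟩ := omegaPow_spec x
  rw [he, ← Nat.succ_pred_eq_of_pos hn]
  exact hx.pow_succ_eq _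

lemma pow_fix_of_fix {x m : M} (n : ℕ) (h : x * m = m) : x ^ n * m = m := by
  induction n with
  | zero => simp
  | succ n ih => rw [pow_succ, mul_assoc, h, ih]

lemma fix_of_pow_fix (hJ : JTrivial M) {x m : M} {n : ℕ} (hn : 0 < n)
    (h : x ^ n * m = m) : x * m = m := by
  refine leJ_antisymm hJ ⟨x, 1, by rw [mul_one]⟩ ⟨x ^ (n - 1), 1, ?_⟩
  have hn' : n - 1 + 1 = n := by omega
  rw [mul_one, ← mul_assoc, ← pow_succ, hn', h]

lemma omega_fix_iff [Fintype M] (hJ : JTrivial M) {x m : M} :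
    x * m = m ↔ omegaPow x * m = m := by
  obtain ⟨_, n, hn, he⟩ := omegaPow_spec x
  constructor
  · intro h; rw [he]; exact pow_fix_of_fix n h
  · intro h; rw [he] at h; exact fix_of_pow_fix hJ hn h

lemma leJ_mul_left (x m : M) : leJ (x * m) m := ⟨x, 1, by rw [mul_one]⟩

lemma fix_left_of_mul (hJ : JTrivial M) {x y m : M} (h : x * y * m = m) :
    y * m = m ∧ x * m = m := by
  have h1 : y * m = m := by
    refine leJ_antisymm hJ (leJ_mul_left y m) ⟨x, 1, ?_⟩
    rw [mul_one, ← mul_assoc, h]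
  refine ⟨h1, ?_⟩
  calc x * m = x * (y * m) := by rw [h1]
    _ = m := by rw [← mul_assoc, h]

lemma fix_right_of_mul (hJ : JTrivial M) {x y m : M} (h : m * (x * y) = m) :
    m * x = m ∧ m * y = m := by
  have h1 : m * x = m := by
    refine leJ_antisymm hJ ⟨1, x, by rw [one_mul]⟩ ⟨1, y, ?_⟩
    rw [one_mul, mul_assoc, h]
  refine ⟨h1, ?_⟩
  calc m * y = m * x * y := by rw [h1]
    _ = m := by rw [mul_assoc, h]

/-- The character of a `J`-trivial monoid attached to an element `m`:
`x ↦ 1` if `x` fixes `m` on both sides, else `0`. -/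
noncomputable def chi (K : Type*) [Semiring K] (hJ : JTrivial M) (m : M) : M →* K where
  toFun x := if x * m = m ∧ m * x = m then 1 else 0
  map_one' := by simp
  map_mul' x y := by
    show (if x * y * m = m ∧ m * (x * y) = m then (1 : K) else 0) =
      (if x * m = m ∧ m * x = m then 1 else 0) * (if y * m = m ∧ m * y = m then 1 else 0)
    by_cases hx : x * m = m ∧ m * x = m
    · by_cases hy : y * m = m ∧ m * y = m
      · rw [if_pos hx, if_pos hy, if_pos, one_mul]
        exact ⟨by rw [mul_assoc, hy.1, hx.1], by rw [← mul_assoc, hx.2, hy.2]⟩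
      · rw [if_pos hx, if_neg hy, if_neg, mul_zero]
        intro hxy
        exact hy ⟨(fix_left_of_mul hJ hxy.1).1, (fix_right_of_mul hJ hxy.2).2⟩
    · rw [if_neg hx, zero_mul, if_neg]
      intro hxy
      exact hx ⟨(fix_left_of_mul hJ hxy.1).2, (fix_right_of_mul hJ hxy.2).1⟩

lemma chi_apply {K : Type*} [Semiring K] (hJ : JTrivial M) (m x : M) :
    chi K hJ m x = if x * m = m ∧ m * x = m then 1 else 0 := rfl

lemma chi_omega {K : Type*} [Field K] [Fintype M] (hJ : JTrivial M) (m x : M) :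
    chi K hJ m (omegaPow x) = chi K hJ m x := by
  obtain ⟨_, n, hn, he⟩ := omegaPow_spec x
  rw [he, map_pow]
  rcases (by rw [chi_apply]; split <;> simp : chi K hJ m x = 1 ∨ chi K hJ m x = 0) with h | h
  · rw [h, one_pow]
  · rw [h, zero_pow hn.ne']

end Aux

section Proof

variable {M : Type*} [Monoid M] [Fintype M] (K : Type*) [Field K]

/-- The algebra character on the monoid algebra attached to `m`. -/
noncomputable def chiA (hJ : JTrivial M) (m : M) : MonoidAlgebra K M →ₐ[K] K :=
  MonoidAlgebra.lift K K M (chi K hJ m)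

/-- The candidate radical: intersection of the kernels of all characters. -/
noncomputable def radCand (hJ : JTrivial M) : Ideal (MonoidAlgebra K M) :=
  ⨅ m : M, RingHom.ker (chiA K hJ m)

lemma ker_chiA_isMaximal (hJ : JTrivial M) (m : M) :
    (RingHom.ker (chiA K hJ m)).IsMaximal := by
  rw [Ideal.isMaximal_def]
  constructor
  · intro htop
    have h1 : (1 : MonoidAlgebra K M) ∈ RingHom.ker (chiA K hJ m) := by
      rw [htop]; trivial
    rw [RingHom.mem_ker, map_one] at h1
    exact one_ne_zero h1
  · intro J hJ'
    obtain ⟨a, haJ, hak⟩ := SetLike.exists_of_lt hJ'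
    have hc : chiA K hJ m a ≠ 0 := by
      intro h; exact hak (by rwa [RingHom.mem_ker])
    rw [Ideal.eq_top_iff_one]
    have hb : algebraMap K (MonoidAlgebra K M) (chiA K hJ m a)⁻¹ * a ∈ J :=
      J.mul_mem_left _ haJ
    have h1b : (1 : MonoidAlgebra K M) - algebraMap K (MonoidAlgebra K M) (chiA K hJ m a)⁻¹ * a
        ∈ RingHom.ker (chiA K hJ m) := by
      rw [RingHom.mem_ker, map_sub, map_one, map_mul, AlgHom.commutes,
        Algebra.algebraMap_self_apply, inv_mul_cancel₀ hc, sub_self]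
    have : (1 : MonoidAlgebra K M) =
        (1 - algebraMap K (MonoidAlgebra K M) (chiA K hJ m a)⁻¹ * a)
          + algebraMap K (MonoidAlgebra K M) (chiA K hJ m a)⁻¹ * a := by
      rw [sub_add_cancel]
    rw [this]
    exact J.add_mem (le_of_lt hJ' h1b) hb

/-- Nil left ideals are contained in every maximal left ideal. -/
lemma nil_le_maximal {R : Type*} [Ring R] (I J : Ideal R)
    (hnil : ∀ a ∈ I, IsNilpotent a) (hmax : J.IsMaximal) : I ≤ J := by
  intro a ha
  by_contra hnot
  have hlt : J < J ⊔ Ideal.span {a} := by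
    refine lt_of_le_of_ne le_sup_left (fun h => hnot ?_)
    have : a ∈ J ⊔ Ideal.span {a} :=
      Submodule.mem_sup_right (Ideal.subset_span (Set.mem_singleton a))
    rwa [← h] at this
  have htop : J ⊔ Ideal.span {a} = ⊤ := (Ideal.isMaximal_def.1 hmax).2 _ hlt
  have h1 : (1 : R) ∈ J ⊔ Ideal.span {a} := htop ▸ trivial
  obtain ⟨y, hy, z, hz, hyz⟩ := Submodule.mem_sup.1 h1
  obtain ⟨r, hr⟩ := Ideal.mem_span_singleton'.1 hz
  have hzI : z ∈ I := by rw [← hr]; exact I.mul_mem_left r ha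
  have hznil : IsNilpotent z := hnil z hzI
  have hyunit : IsUnit y := by
    have : y = 1 - z := eq_sub_of_add_eq hyz
    rw [this]
    exact hznil.isUnit_one_sub
  exact hmax.ne_top (J.eq_top_of_isUnit_mem hy hyunit)

variable {K}

/-- count of elements `J`-below `m`. -/
noncomputable def cntJ (m : M) : ℕ := Set.ncard {z : M | leJ z m}

lemma cntJ_pos (m : M) : 0 < cntJ m :=
  (Set.ncard_pos (Set.toFinite _)).2 ⟨m, leJ_refl m⟩

lemma cntJ_le_card (m : M) : cntJ m ≤ Fintype.card M := by
  have := Set.ncard_le_ncard (Set.subset_univ {z : M | leJ z m}) (Set.toFinite _)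
  rwa [Set.ncard_univ, Nat.card_eq_fintype_card] at this

lemma cntJ_lt_cntJ (hJ : JTrivial M) {y m : M} (h1 : leJ y m) (h2 : y ≠ m) :
    cntJ y < cntJ m := by
  apply Set.ncard_lt_ncard _ (Set.toFinite _)
  rw [Set.ssubset_def]
  constructor
  · intro z hz
    exact leJ_trans hz h1
  · intro hsub
    have : leJ m y := hsub (leJ_refl m)
    exact h2 (leJ_antisymm hJ h1 this)

end Proof

section Main

variable {M : Type*} [Monoid M] [Fintype M] {K : Type*} [Field K]

/-- The generating family `x - x^ω` over non-idempotent `x`. -/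
noncomputable def genFam (K : Type*) [Field K] (M : Type*) [Monoid M] [Fintype M] :
    {x : M // ¬ IsIdempotentElem x} → MonoidAlgebra K M :=
  fun x => MonoidAlgebra.of K M x.1 - MonoidAlgebra.of K M (omegaPow x.1)

lemma gen_mem_ker (hJ : JTrivial M) (m : M) (x : M) :
    (MonoidAlgebra.of K M x - MonoidAlgebra.of K M (omegaPow x) : MonoidAlgebra K M)
      ∈ RingHom.ker (chiA K hJ m) := by
  rw [RingHom.mem_ker, map_sub]
  show MonoidAlgebra.lift K K M (chi K hJ m) _ - MonoidAlgebra.lift K K M (chi K hJ m) _ = 0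
  rw [MonoidAlgebra.lift_of, MonoidAlgebra.lift_of, chi_omega hJ, sub_self]

lemma genFam_linearIndependent : LinearIndependent K (genFam K M) := by
  rw [linearIndependent_iff']
  intro s g hsum i hi
  have h := congrArg (fun f : MonoidAlgebra K M => f.coeff i.1) hsum
  change (∑ j ∈ s, g j • genFam K M j).coeff i.1 = (0 : MonoidAlgebra K M).coeff i.1 at h
  rw [MonoidAlgebra.coeff_sum, Finsupp.finset_sum_apply, MonoidAlgebra.coeff_zero,
    Finsupp.zero_apply] at h
  have hterm : ∀ j ∈ s, (g j • genFam K M j).coeff i.1 = if j = i then g j else 0 := by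
    intro j _
    show (g j • (MonoidAlgebra.of K M j.1 - MonoidAlgebra.of K M (omegaPow j.1))).coeff i.1 = _
    rw [MonoidAlgebra.coeff_smul, Finsupp.smul_apply, MonoidAlgebra.coeff_sub, Finsupp.sub_apply,
      MonoidAlgebra.of_apply,
      MonoidAlgebra.of_apply, MonoidAlgebra.coeff_single, MonoidAlgebra.coeff_single]
    have hne : ¬ omegaPow j.1 = i.1 := fun he => i.2 (he ▸ (omegaPow_spec j.1).1)
    rw [Finsupp.single_apply, Finsupp.single_apply, if_neg hne, sub_zero]
    by_cases hji : j = i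
    · rw [if_pos (by rw [hji]), if_pos hji, smul_eq_mul, mul_one]
    · rw [if_neg (fun hh => hji (Subtype.ext hh)), if_neg hji, smul_eq_mul, mul_zero]
  rw [Finset.sum_congr rfl hterm, Finset.sum_ite_eq' s i g, if_pos hi] at h
  exact h

lemma mul_single_mem (hJ : JTrivial M) {a : MonoidAlgebra K M}
    (ha : a ∈ Submodule.span K (Set.range (genFam K M))) (m : M) :
    a * MonoidAlgebra.single m (1 : K) ∈
      Submodule.span K {b : MonoidAlgebra K M |
        ∃ y : M, leJ y m ∧ y ≠ m ∧ b = MonoidAlgebra.single y (1 : K)} := by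
  induction ha using Submodule.span_induction with
  | mem x hx =>
    obtain ⟨j, rfl⟩ := hx
    show (MonoidAlgebra.of K M j.1 - MonoidAlgebra.of K M (omegaPow j.1)) *
      MonoidAlgebra.single m (1 : K) ∈ _
    rw [sub_mul, MonoidAlgebra.of_apply, MonoidAlgebra.of_apply,
      MonoidAlgebra.single_mul_single, MonoidAlgebra.single_mul_single, one_mul]
    by_cases hfix : j.1 * m = m
    · rw [hfix, (omega_fix_iff hJ).1 hfix, sub_self]
      exact Submodule.zero_mem _
    · refine Submodule.sub_mem _ (Submodule.subset_span ?_) (Submodule.subset_span ?_)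
      · exact ⟨j.1 * m, leJ_mul_left _ _, hfix, rfl⟩
      · exact ⟨omegaPow j.1 * m, leJ_mul_left _ _,
          fun h => hfix ((omega_fix_iff hJ).2 h), rfl⟩
  | zero => rw [zero_mul]; exact Submodule.zero_mem _
  | add x y hx hy ihx ihy => rw [add_mul]; exact Submodule.add_mem _ ihx ihy
  | smul c x hx ih => rw [smul_mul_assoc]; exact Submodule.smul_mem _ _ ih

lemma pow_mul_single (hJ : JTrivial M) {a : MonoidAlgebra K M}
    (ha : a ∈ Submodule.span K (Set.range (genFam K M))) :
    ∀ n : ℕ, ∀ m : M, cntJ m ≤ n → a ^ n * MonoidAlgebra.single m (1 : K) = 0 := by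
  intro n
  induction n with
  | zero => intro m hm; exact absurd hm (by have := cntJ_pos m; omega)
  | succ n ih =>
    intro m hm
    have key : ∀ w ∈ Submodule.span K {b : MonoidAlgebra K M |
        ∃ y : M, leJ y m ∧ y ≠ m ∧ b = MonoidAlgebra.single y (1 : K)},
        a ^ n * w = 0 := by
      intro w hw
      induction hw using Submodule.span_induction with
      | mem w hwmem =>
        obtain ⟨y, hy1, hy2, rfl⟩ := hwmem
        exact ih y (by have := cntJ_lt_cntJ hJ hy1 hy2; omega)
      | zero => rw [mul_zero]
      | add x y hx hy ihx ihy => rw [mul_add, ihx, ihy, add_zero]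
      | smul c x hx ihx => rw [mul_smul_comm, ihx, smul_zero]
    rw [pow_succ, mul_assoc]
    exact key _ (mul_single_mem hJ ha m)

lemma span_nilpotent (hJ : JTrivial M) {a : MonoidAlgebra K M}
    (ha : a ∈ Submodule.span K (Set.range (genFam K M))) : IsNilpotent a := by
  refine ⟨cntJ (1 : M), ?_⟩
  have h := pow_mul_single hJ ha (cntJ (1 : M)) 1 le_rfl
  rwa [← MonoidAlgebra.one_def, mul_one] at h

lemma span_le_radCand (hJ : JTrivial M) :
    Submodule.span K (Set.range (genFam K M)) ≤
      Submodule.restrictScalars K (radCand K hJ) := by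
  rw [Submodule.span_le]
  rintro _ ⟨j, rfl⟩
  show genFam K M j ∈ radCand K hJ
  rw [radCand]
  rw [Submodule.mem_iInf]
  intro m
  exact gen_mem_ker hJ m j.1

lemma radCand_le_span (hJ : JTrivial M) {a : MonoidAlgebra K M}
    (ha : a ∈ radCand K hJ) :
    a ∈ Submodule.span K (Set.range (genFam K M)) := by
  set P := Submodule.span K (Set.range (genFam K M)) with hP
  set t : MonoidAlgebra K M :=
    ∑ x : M, a.coeff x • (MonoidAlgebra.of K M x - MonoidAlgebra.of K M (omegaPow x)) with ht
  have htP : t ∈ P := by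
    refine Submodule.sum_mem _ ?_
    intro x _
    by_cases hx : IsIdempotentElem x
    · rw [omegaPow_of_idem hx, sub_self, smul_zero]
      exact Submodule.zero_mem _
    · exact Submodule.smul_mem _ _ (Submodule.subset_span ⟨⟨x, hx⟩, rfl⟩)
  set b : MonoidAlgebra K M :=
    ∑ x : M, a.coeff x • MonoidAlgebra.of K M (omegaPow x) with hb
  have hsingle : ∀ x : M, a.coeff x • MonoidAlgebra.of K M (omegaPow x) =
      MonoidAlgebra.single (omegaPow x) (a.coeff x) := by
    intro x
    rw [MonoidAlgebra.of_apply, MonoidAlgebra.smul_single', mul_one]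
  have hab : a = t + b := by
    rw [ht, hb, ← Finset.sum_add_distrib]
    have hx : ∀ x ∈ Finset.univ,
        a.coeff x • (MonoidAlgebra.of K M x - MonoidAlgebra.of K M (omegaPow x)) +
          a.coeff x • MonoidAlgebra.of K M (omegaPow x) = MonoidAlgebra.single x (a.coeff x) := by
      intro x _
      rw [smul_sub, sub_add_cancel, MonoidAlgebra.of_apply, MonoidAlgebra.smul_single',
        mul_one]
    rw [Finset.sum_congr rfl hx]
    exact MonoidAlgebra.coeff_injective (by
      rw [MonoidAlgebra.coeff_sum]; simp only [MonoidAlgebra.coeff_single]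
      exact (Finsupp.univ_sum_single a.coeff).symm)
  by_cases hb0 : b = 0
  · rw [hab, hb0, add_zero]
    exact htP
  exfalso
  have hbI : b ∈ radCand K hJ := by
    have h1 : t ∈ radCand K hJ := span_le_radCand hJ htP
    have h2 : b = a - t := by rw [hab]; abel
    rw [h2]
    exact Submodule.sub_mem _ ha h1
  have hsupp : ∀ f ∈ b.coeff.support, IsIdempotentElem f := by
    intro f hf
    rw [hb, MonoidAlgebra.coeff_sum] at hf
    obtain ⟨x, _, hx⟩ := Finsupp.mem_support_finset_sum f hf
    rw [hsingle x, MonoidAlgebra.coeff_single] at hx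
    have hmem := Finsupp.support_single_subset hx
    rw [Finset.mem_singleton] at hmem
    rw [hmem]
    exact (omegaPow_spec x).1
  obtain ⟨f, hf, hfmax⟩ := Finset.exists_max_image b.coeff.support cntJ
    (Finsupp.support_nonempty_iff.2 (by rwa [Ne, MonoidAlgebra.coeff_eq_zero]))
  have hker : chiA K hJ f b = 0 := by
    have h1 : b ∈ RingHom.ker (chiA K hJ f) := by
      rw [radCand] at hbI
      exact (Submodule.mem_iInf _).1 hbI f
    rwa [RingHom.mem_ker] at h1
  have hcalc : chiA K hJ f b = b.coeff f := by
    show MonoidAlgebra.lift K K M (chi K hJ f) b = b.coeff f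
    rw [MonoidAlgebra.lift_apply, Finsupp.sum, Finset.sum_eq_single f]
    · have hid : f * f = f := hsupp f hf
      rw [chi_apply, if_pos ⟨hid, hid⟩, smul_eq_mul, mul_one]
    · intro m hm hne
      have hchi : chi K hJ f m = (0 : K) := by
        rw [chi_apply, if_neg]
        intro hfix
        have hle : leJ f m := ⟨1, f, by rw [one_mul]; exact hfix.1.symm⟩
        have hlt : cntJ f < cntJ m := cntJ_lt_cntJ hJ hle (fun hh => hne hh.symm)
        have := hfmax m hm
        omega
      rw [hchi, smul_zero]
    · intro hnotin
      exact absurd hf hnotin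
  rw [hker] at hcalc
  exact Finsupp.mem_support_iff.1 hf hcalc.symm

end Main

/-- For a finite `J`-trivial monoid `M` and a field `K`, the family
`(x - x^ω)`, for `x` ranging over the non-idempotent elements of `M`, is a `K`-basis of the
Jacobson radical of the monoid algebra `K[M]`: it is linearly independent and its `K`-span is
the radical. -/
theorem radical_basis (K : Type*) [Field K] {M : Type*} [Monoid M] [Fintype M]
    (hJ : JTrivial M) :
    LinearIndependent K
      (fun x : {x : M // ¬ IsIdempotentElem x} =>
        (MonoidAlgebra.of K M x.1 - MonoidAlgebra.of K M (omegaPow x.1) :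
          MonoidAlgebra K M)) ∧
    Submodule.span K
      (Set.range (fun x : {x : M // ¬ IsIdempotentElem x} =>
        (MonoidAlgebra.of K M x.1 - MonoidAlgebra.of K M (omegaPow x.1) :
          MonoidAlgebra K M)))
      = Submodule.restrictScalars K
          (Ideal.jacobson (⊥ : Ideal (MonoidAlgebra K M))) := by
  constructor
  · exact genFam_linearIndependent
  · have hrange : (Set.range (fun x : {x : M // ¬ IsIdempotentElem x} =>
        (MonoidAlgebra.of K M x.1 - MonoidAlgebra.of K M (omegaPow x.1) :
          MonoidAlgebra K M))) = Set.range (genFam K M) := rfl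
    rw [hrange]
    apply le_antisymm
    · have hle : radCand K hJ ≤ Ideal.jacobson (⊥ : Ideal (MonoidAlgebra K M)) := by
        rw [Ideal.jacobson]
        refine le_sInf ?_
        rintro J ⟨-, hmax⟩
        exact nil_le_maximal _ J
          (fun a ha => span_nilpotent hJ (radCand_le_span hJ ha)) hmax
      intro a ha
      exact hle (span_le_radCand hJ ha)
    · intro a ha
      have haJ : a ∈ Ideal.jacobson (⊥ : Ideal (MonoidAlgebra K M)) := ha
      have haI : a ∈ radCand K hJ := by
        rw [radCand, Submodule.mem_iInf]
        intro m
        rw [Ideal.jacobson] at haJ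
        have hk : RingHom.ker (chiA K hJ m) ∈
            {J : Ideal (MonoidAlgebra K M) | ⊥ ≤ J ∧ J.IsMaximal} :=
          ⟨bot_le, ker_chiA_isMaximal K hJ m⟩
        exact sInf_le hk haJ
      exact radCand_le_span hJ haI
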